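/- The discrete operator L^h defined by (L^h p) = −D((H/ρ) G p) + (GH)(1/m)(Σ p GH h²) + J^h · 𝕀⁻¹(Σ p J^h h²)-type coupling is symmetric with respect to the standard inner product on ℝ^{|Ω^h|}: ⟨L^h p⁽¹⁾, p⁽²⁾⟩ = ⟨p⁽¹⁾, L^h p⁽²⁾⟩ for all grid functions p⁽¹⁾, p⁽²⁾. -/

import Mathlib

/-- `(G_x H)_{ij} = (H_{i+1/2,j} − H_{i−1/2,j})/h`, where `Hx (i,j)` stands for `H_{i+1/2,j}`. -/
noncomputable def GHx (h : ℝ) (Hx : ℤ × ℤ → ℝ) (ij : ℤ × ℤ) : ℝ :=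
  (Hx ij - Hx (ij.1 - 1, ij.2)) / h

/-- `(G_y H)_{ij} = (H_{i,j+1/2} − H_{i,j−1/2})/h`, where `Hy (i,j)` stands for `H_{i,j+1/2}`. -/
noncomputable def GHy (h : ℝ) (Hy : ℤ × ℤ → ℝ) (ij : ℤ × ℤ) : ℝ :=
  (Hy ij - Hy (ij.1, ij.2 - 1)) / h

/-- The discrete operator
`L^h p = −D((H/ρ)Gp) + (GH)(1/m)(Σ p GH h²) + J^h 𝕀⁻¹ (Σ p J^h h²)` on the 2-D MAC grid
(with scalar inertia `I`). -/
noncomputable def Lh (h m I : ℝ) (ρx ρy Hx Hy Jh : ℤ × ℤ → ℝ) (p : ℤ × ℤ → ℝ)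
    (ij : ℤ × ℤ) : ℝ :=
  -(((Hx ij / ρx ij) * ((p (ij.1 + 1, ij.2) - p ij) / h)
      - (Hx (ij.1 - 1, ij.2) / ρx (ij.1 - 1, ij.2)) * ((p ij - p (ij.1 - 1, ij.2)) / h)) / h
    + ((Hy ij / ρy ij) * ((p (ij.1, ij.2 + 1) - p ij) / h)
      - (Hy (ij.1, ij.2 - 1) / ρy (ij.1, ij.2 - 1)) * ((p ij - p (ij.1, ij.2 - 1)) / h)) / h)
  + (GHx h Hx ij * (∑ᶠ kl : ℤ × ℤ, p kl * GHx h Hx kl)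
      + GHy h Hy ij * (∑ᶠ kl : ℤ × ℤ, p kl * GHy h Hy kl)) * h ^ 2 / m
  + Jh ij * (∑ᶠ kl : ℤ × ℤ, p kl * Jh kl) * h ^ 2 / I

lemma fin_of_imp {α : Type*} {f g : α → ℝ} (hf : (Function.support f).Finite)
    (h : ∀ x, f x = 0 → g x = 0) : (Function.support g).Finite :=
  hf.subset fun x hgx hfx0 => hgx (h x hfx0)

lemma shiftx (g : ℤ × ℤ → ℝ) :
    ∑ᶠ ij : ℤ × ℤ, g (ij.1 + 1, ij.2) = ∑ᶠ ij : ℤ × ℤ, g ij := by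
  have h := finsum_comp_equiv (f := g) ((Equiv.addRight (1:ℤ)).prodCongr (Equiv.refl ℤ))
  refine Eq.trans ?_ h
  exact finsum_congr fun ij => rfl

lemma shifty (g : ℤ × ℤ → ℝ) :
    ∑ᶠ ij : ℤ × ℤ, g (ij.1, ij.2 + 1) = ∑ᶠ ij : ℤ × ℤ, g ij := by
  have h := finsum_comp_equiv (f := g) ((Equiv.refl ℤ).prodCongr (Equiv.addRight (1:ℤ)))
  refine Eq.trans ?_ h
  exact finsum_congr fun ij => rfl

lemma sum_shift_x (h : ℝ) (a q r : ℤ × ℤ → ℝ)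
    (ha : (Function.support a).Finite) (hr : (Function.support r).Finite) :
    ∑ᶠ ij : ℤ × ℤ, (-((a ij * ((q (ij.1 + 1, ij.2) - q ij) / h)
        - a (ij.1 - 1, ij.2) * ((q ij - q (ij.1 - 1, ij.2)) / h)) / h)) * r ij
      = ∑ᶠ ij : ℤ × ℤ, a ij * ((q (ij.1 + 1, ij.2) - q ij) / h)
          * ((r (ij.1 + 1, ij.2) - r ij) / h) := by
  have step1 : ∀ ij : ℤ × ℤ,
      (-((a ij * ((q (ij.1 + 1, ij.2) - q ij) / h)
        - a (ij.1 - 1, ij.2) * ((q ij - q (ij.1 - 1, ij.2)) / h)) / h)) * r ij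
      = a (ij.1 - 1, ij.2) * ((q ij - q (ij.1 - 1, ij.2)) / h) * (r ij / h)
        - a ij * ((q (ij.1 + 1, ij.2) - q ij) / h) * (r ij / h) := fun ij => by ring
  rw [finsum_congr step1]
  have h1 : (Function.support fun ij : ℤ × ℤ =>
      a (ij.1 - 1, ij.2) * ((q ij - q (ij.1 - 1, ij.2)) / h) * (r ij / h)).Finite :=
    fin_of_imp hr fun x hx => by simp [hx]
  have h2 : (Function.support fun ij : ℤ × ℤ =>
      a ij * ((q (ij.1 + 1, ij.2) - q ij) / h) * (r ij / h)).Finite :=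
    fin_of_imp ha fun x hx => by simp [hx]
  rw [finsum_sub_distrib h1 h2]
  have hshift := shiftx (fun ij : ℤ × ℤ =>
      a (ij.1 - 1, ij.2) * ((q ij - q (ij.1 - 1, ij.2)) / h) * (r ij / h))
  rw [← hshift]
  have step2 : ∀ ij : ℤ × ℤ,
      (fun ij : ℤ × ℤ => a (ij.1 - 1, ij.2) * ((q ij - q (ij.1 - 1, ij.2)) / h) * (r ij / h))
          (ij.1 + 1, ij.2)
      = a ij * ((q (ij.1 + 1, ij.2) - q ij) / h) * (r (ij.1 + 1, ij.2) / h) := by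
    intro ij
    simp [add_sub_cancel_right]
  rw [finsum_congr step2]
  have h3 : (Function.support fun ij : ℤ × ℤ =>
      a ij * ((q (ij.1 + 1, ij.2) - q ij) / h) * (r (ij.1 + 1, ij.2) / h)).Finite :=
    fin_of_imp ha fun x hx => by simp [hx]
  rw [← finsum_sub_distrib h3 h2]
  exact finsum_congr fun ij => by ring

lemma sum_shift_y (h : ℝ) (a q r : ℤ × ℤ → ℝ)
    (ha : (Function.support a).Finite) (hr : (Function.support r).Finite) :
    ∑ᶠ ij : ℤ × ℤ, (-((a ij * ((q (ij.1, ij.2 + 1) - q ij) / h)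
        - a (ij.1, ij.2 - 1) * ((q ij - q (ij.1, ij.2 - 1)) / h)) / h)) * r ij
      = ∑ᶠ ij : ℤ × ℤ, a ij * ((q (ij.1, ij.2 + 1) - q ij) / h)
          * ((r (ij.1, ij.2 + 1) - r ij) / h) := by
  have step1 : ∀ ij : ℤ × ℤ,
      (-((a ij * ((q (ij.1, ij.2 + 1) - q ij) / h)
        - a (ij.1, ij.2 - 1) * ((q ij - q (ij.1, ij.2 - 1)) / h)) / h)) * r ij
      = a (ij.1, ij.2 - 1) * ((q ij - q (ij.1, ij.2 - 1)) / h) * (r ij / h)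
        - a ij * ((q (ij.1, ij.2 + 1) - q ij) / h) * (r ij / h) := fun ij => by ring
  rw [finsum_congr step1]
  have h1 : (Function.support fun ij : ℤ × ℤ =>
      a (ij.1, ij.2 - 1) * ((q ij - q (ij.1, ij.2 - 1)) / h) * (r ij / h)).Finite :=
    fin_of_imp hr fun x hx => by simp [hx]
  have h2 : (Function.support fun ij : ℤ × ℤ =>
      a ij * ((q (ij.1, ij.2 + 1) - q ij) / h) * (r ij / h)).Finite :=
    fin_of_imp ha fun x hx => by simp [hx]
  rw [finsum_sub_distrib h1 h2]
  have hshift := shifty (fun ij : ℤ × ℤ =>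
      a (ij.1, ij.2 - 1) * ((q ij - q (ij.1, ij.2 - 1)) / h) * (r ij / h))
  rw [← hshift]
  have step2 : ∀ ij : ℤ × ℤ,
      (fun ij : ℤ × ℤ => a (ij.1, ij.2 - 1) * ((q ij - q (ij.1, ij.2 - 1)) / h) * (r ij / h))
          (ij.1, ij.2 + 1)
      = a ij * ((q (ij.1, ij.2 + 1) - q ij) / h) * (r (ij.1, ij.2 + 1) / h) := by
    intro ij
    simp [add_sub_cancel_right]
  rw [finsum_congr step2]
  have h3 : (Function.support fun ij : ℤ × ℤ =>
      a ij * ((q (ij.1, ij.2 + 1) - q ij) / h) * (r (ij.1, ij.2 + 1) / h)).Finite :=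
    fin_of_imp ha fun x hx => by simp [hx]
  rw [← finsum_sub_distrib h3 h2]
  exact finsum_congr fun ij => by ring

lemma rankone (u r : ℤ × ℤ → ℝ) (c : ℝ) (hr : (Function.support r).Finite) :
    ∑ᶠ ij : ℤ × ℤ, (u ij * c) * r ij = (∑ᶠ ij : ℤ × ℤ, r ij * u ij) * c := by
  rw [finsum_mul _ c]
  exact finsum_congr fun ij => by ring

lemma finsum_add5 {F1 F2 F3 F4 F5 : ℤ × ℤ → ℝ}
    (h1 : (Function.support F1).Finite) (h2 : (Function.support F2).Finite)
    (h3 : (Function.support F3).Finite) (h4 : (Function.support F4).Finite)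
    (h5 : (Function.support F5).Finite) :
    ∑ᶠ ij : ℤ × ℤ, (F1 ij + F2 ij + F3 ij + F4 ij + F5 ij)
      = (∑ᶠ ij, F1 ij) + (∑ᶠ ij, F2 ij) + (∑ᶠ ij, F3 ij) + (∑ᶠ ij, F4 ij)
        + (∑ᶠ ij, F5 ij) := by
  have h12 : (Function.support fun ij => F1 ij + F2 ij).Finite :=
    (h1.union h2).subset (Function.support_add _ _)
  have h123 : (Function.support fun ij => F1 ij + F2 ij + F3 ij).Finite :=
    (h12.union h3).subset (Function.support_add _ _)
  have h1234 : (Function.support fun ij => F1 ij + F2 ij + F3 ij + F4 ij).Finite :=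
    (h123.union h4).subset (Function.support_add _ _)
  rw [finsum_add_distrib h1234 h5, finsum_add_distrib h123 h4, finsum_add_distrib h12 h3,
    finsum_add_distrib h1 h2]

lemma Lh_key (h m I : ℝ) (ρx ρy Hx Hy Jh : ℤ × ℤ → ℝ)
    (hHx : (Function.support Hx).Finite) (hHy : (Function.support Hy).Finite)
    (q r : ℤ × ℤ → ℝ) (hr : (Function.support r).Finite) :
    (∑ᶠ ij : ℤ × ℤ, Lh h m I ρx ρy Hx Hy Jh q ij * r ij)
      = (∑ᶠ ij : ℤ × ℤ, (Hx ij / ρx ij) * ((q (ij.1 + 1, ij.2) - q ij) / h)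
            * ((r (ij.1 + 1, ij.2) - r ij) / h))
        + (∑ᶠ ij : ℤ × ℤ, (Hy ij / ρy ij) * ((q (ij.1, ij.2 + 1) - q ij) / h)
            * ((r (ij.1, ij.2 + 1) - r ij) / h))
        + ((∑ᶠ ij : ℤ × ℤ, r ij * GHx h Hx ij) * ((∑ᶠ kl : ℤ × ℤ, q kl * GHx h Hx kl) * h ^ 2 / m)
          + (∑ᶠ ij : ℤ × ℤ, r ij * GHy h Hy ij)
            * ((∑ᶠ kl : ℤ × ℤ, q kl * GHy h Hy kl) * h ^ 2 / m))
        + (∑ᶠ ij : ℤ × ℤ, r ij * Jh ij) * ((∑ᶠ kl : ℤ × ℤ, q kl * Jh kl) * h ^ 2 / I) := by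
  have step1 : ∀ ij : ℤ × ℤ, Lh h m I ρx ρy Hx Hy Jh q ij * r ij
      = (-(((Hx ij / ρx ij) * ((q (ij.1 + 1, ij.2) - q ij) / h)
            - (Hx (ij.1 - 1, ij.2) / ρx (ij.1 - 1, ij.2))
              * ((q ij - q (ij.1 - 1, ij.2)) / h)) / h)) * r ij
        + (-(((Hy ij / ρy ij) * ((q (ij.1, ij.2 + 1) - q ij) / h)
            - (Hy (ij.1, ij.2 - 1) / ρy (ij.1, ij.2 - 1))
              * ((q ij - q (ij.1, ij.2 - 1)) / h)) / h)) * r ij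
        + (GHx h Hx ij * ((∑ᶠ kl : ℤ × ℤ, q kl * GHx h Hx kl) * h ^ 2 / m)) * r ij
        + (GHy h Hy ij * ((∑ᶠ kl : ℤ × ℤ, q kl * GHy h Hy kl) * h ^ 2 / m)) * r ij
        + (Jh ij * ((∑ᶠ kl : ℤ × ℤ, q kl * Jh kl) * h ^ 2 / I)) * r ij := by
    intro ij
    simp only [Lh]
    ring
  rw [finsum_congr step1,
    finsum_add5 (fin_of_imp hr fun x hx => by simp [hx]) (fin_of_imp hr fun x hx => by simp [hx])
      (fin_of_imp hr fun x hx => by simp [hx]) (fin_of_imp hr fun x hx => by simp [hx])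
      (fin_of_imp hr fun x hx => by simp [hx])]
  have ha : (Function.support fun ij : ℤ × ℤ => Hx ij / ρx ij).Finite :=
    fin_of_imp hHx fun x hx => by simp [hx]
  have hb : (Function.support fun ij : ℤ × ℤ => Hy ij / ρy ij).Finite :=
    fin_of_imp hHy fun x hx => by simp [hx]
  rw [sum_shift_x h (fun ij => Hx ij / ρx ij) q r ha hr,
    sum_shift_y h (fun ij => Hy ij / ρy ij) q r hb hr,
    rankone _ _ _ hr, rankone _ _ _ hr, rankone _ _ _ hr]
  ring

/-- The discrete operator `L^h` is symmetric with respect to the standard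
inner product: `⟨L^h p⁽¹⁾, p⁽²⁾⟩ = ⟨p⁽¹⁾, L^h p⁽²⁾⟩` for all grid functions. -/
theorem Lh_symmetric
    (h m I : ℝ) (hh : 0 < h) (hm : 0 < m) (hI : 0 < I)
    (ρx ρy : ℤ × ℤ → ℝ) (hρx : ∀ ij, 0 < ρx ij) (hρy : ∀ ij, 0 < ρy ij)
    (Hx Hy : ℤ × ℤ → ℝ)
    (hHx01 : ∀ ij, Hx ij ∈ Set.Icc (0 : ℝ) 1) (hHy01 : ∀ ij, Hy ij ∈ Set.Icc (0 : ℝ) 1)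
    (hHx : (Function.support Hx).Finite) (hHy : (Function.support Hy).Finite)
    (c : ℝ × ℝ) (xt : ℤ × ℤ → ℝ × ℝ) (Jh : ℤ × ℤ → ℝ)
    (hJh : ∀ ij, Jh ij = ((xt ij).1 - c.1) * GHy h Hy ij - ((xt ij).2 - c.2) * GHx h Hx ij)
    (p₁ p₂ : ℤ × ℤ → ℝ)
    (hp₁ : (Function.support p₁).Finite) (hp₂ : (Function.support p₂).Finite) :
    (∑ᶠ ij : ℤ × ℤ, Lh h m I ρx ρy Hx Hy Jh p₁ ij * p₂ ij)
      = ∑ᶠ ij : ℤ × ℤ, p₁ ij * Lh h m I ρx ρy Hx Hy Jh p₂ ij := by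
  have hcomm : (∑ᶠ ij : ℤ × ℤ, p₁ ij * Lh h m I ρx ρy Hx Hy Jh p₂ ij)
      = ∑ᶠ ij : ℤ × ℤ, Lh h m I ρx ρy Hx Hy Jh p₂ ij * p₁ ij :=
    finsum_congr fun ij => mul_comm _ _
  rw [hcomm, Lh_key h m I ρx ρy Hx Hy Jh hHx hHy p₁ p₂ hp₂,
    Lh_key h m I ρx ρy Hx Hy Jh hHx hHy p₂ p₁ hp₁]
  have e1 : (∑ᶠ ij : ℤ × ℤ, (Hx ij / ρx ij) * ((p₁ (ij.1 + 1, ij.2) - p₁ ij) / h)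
        * ((p₂ (ij.1 + 1, ij.2) - p₂ ij) / h))
      = ∑ᶠ ij : ℤ × ℤ, (Hx ij / ρx ij) * ((p₂ (ij.1 + 1, ij.2) - p₂ ij) / h)
        * ((p₁ (ij.1 + 1, ij.2) - p₁ ij) / h) := finsum_congr fun ij => by ring
  have e2 : (∑ᶠ ij : ℤ × ℤ, (Hy ij / ρy ij) * ((p₁ (ij.1, ij.2 + 1) - p₁ ij) / h)
        * ((p₂ (ij.1, ij.2 + 1) - p₂ ij) / h))
      = ∑ᶠ ij : ℤ × ℤ, (Hy ij / ρy ij) * ((p₂ (ij.1, ij.2 + 1) - p₂ ij) / h)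
        * ((p₁ (ij.1, ij.2 + 1) - p₁ ij) / h) := finsum_congr fun ij => by ring
  rw [e1, e2]
  ring
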